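/- Reduction to the characteristic equation: Consider the isotropic oscillator–bath system ẍ − Bẏ + αx = Σⱼ mⱼωⱼ²(xⱼ−x), ÿ + Bẋ + αy = Σⱼ mⱼωⱼ²(yⱼ−y), ẍⱼ + ωⱼ²xⱼ = ωⱼ²x, ÿⱼ + ωⱼ²yⱼ = ωⱼ²y (j = 1,…,N), with mⱼ > 0 and 0 < ω₁ < ⋯ < ω_N, written as a first-order system ż = Az on ℝ^{4N+4}. For every real ω with ω² ≠ ωⱼ² for all j, the purely imaginary number iω is an eigenvalue of A if and only if there exists a sign s ∈ {+1, −1} such that (ω + sB/2)² − (α + B²/4) = Σⱼ mⱼωⱼ²ω²/(ω² − ωⱼ²). -/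

import Mathlib

set_option maxRecDepth 4000
lemma neg_ite' (p : Prop) [Decidable p] (a : ℂ) : (-if p then a else 0) = if p then -a else 0 := by split <;> simp
lemma ofReal_ite (p : Prop) [Decidable p] (a b : ℝ) :
    ((if p then a else b : ℝ) : ℂ) = if p then (a:ℂ) else b := apply_ite _ _ _ _


open Matrix

/-- Index type for the oscillator–bath first-order system: the first four
coordinates are (x, y, ẋ, ẏ) and, for each bath oscillator j, the four coordinates
are (xⱼ, yⱼ, ẋⱼ, ẏⱼ). -/
abbrev BathIdx (N : ℕ) := Fin 4 ⊕ Fin N × Fin 4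

/-- The (4N+4)×(4N+4) matrix A of the isotropic oscillator–bath system
ẍ − Bẏ + αx = Σⱼ mⱼωⱼ²(xⱼ−x), ÿ + Bẋ + αy = Σⱼ mⱼωⱼ²(yⱼ−y),
ẍⱼ + ωⱼ²xⱼ = ωⱼ²x, ÿⱼ + ωⱼ²yⱼ = ωⱼ²y, written as ż = Az with
z = (x, y, ẋ, ẏ, x₁, y₁, ẋ₁, ẏ₁, …). -/
noncomputable def bathA (N : ℕ) (α B : ℝ) (m ω : Fin N → ℝ) :
    Matrix (BathIdx N) (BathIdx N) ℝ :=
  Matrix.of fun i j =>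
    match i, j with
    | .inl 0, .inl 2 => 1
    | .inl 1, .inl 3 => 1
    | .inl 2, .inl 0 => -(α + ∑ k, m k * ω k ^ 2)
    | .inl 2, .inl 3 => B
    | .inl 2, .inr (k, 0) => m k * ω k ^ 2
    | .inl 3, .inl 1 => -(α + ∑ k, m k * ω k ^ 2)
    | .inl 3, .inl 2 => -B
    | .inl 3, .inr (k, 1) => m k * ω k ^ 2
    | .inr (k, 0), .inr (k', 2) => if k = k' then 1 else 0
    | .inr (k, 1), .inr (k', 3) => if k = k' then 1 else 0
    | .inr (k, 2), .inl 0 => ω k ^ 2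
    | .inr (k, 2), .inr (k', 0) => if k = k' then -(ω k ^ 2) else 0
    | .inr (k, 3), .inl 1 => ω k ^ 2
    | .inr (k, 3), .inr (k', 1) => if k = k' then -(ω k ^ 2) else 0
    | _, _ => 0

section rows
variable {N : ℕ} (α B : ℝ) (m ω : Fin N → ℝ) (w : ℝ) (v : BathIdx N → ℂ)

noncomputable def Mw : Matrix (BathIdx N) (BathIdx N) ℂ :=
  (Complex.I * w) • (1 : Matrix (BathIdx N) (BathIdx N) ℂ) -
    (bathA N α B m ω).map Complex.ofReal

lemma row0 : (Mw α B m ω w).mulVec v (Sum.inl 0) =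
    Complex.I * w * v (Sum.inl 0) - v (Sum.inl 2) := by
  simp [Mw, Matrix.mulVec, dotProduct, Fintype.sum_sum_type, Fintype.sum_prod_type,
    Fin.sum_univ_four, bathA, Matrix.one_apply, Matrix.smul_apply, Matrix.sub_apply]
  ring

lemma row1 : (Mw α B m ω w).mulVec v (Sum.inl 1) =
    Complex.I * w * v (Sum.inl 1) - v (Sum.inl 3) := by
  simp [Mw, Matrix.mulVec, dotProduct, Fintype.sum_sum_type, Fintype.sum_prod_type,
    Fin.sum_univ_four, bathA, Matrix.one_apply, Matrix.smul_apply, Matrix.sub_apply]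
  ring

lemma row2 : (Mw α B m ω w).mulVec v (Sum.inl 2) =
    Complex.I * w * v (Sum.inl 2) + (α + ∑ k, (m k : ℂ) * (ω k)^2) * v (Sum.inl 0)
      - B * v (Sum.inl 3) - ∑ k, (m k : ℂ) * (ω k)^2 * v (Sum.inr (k, 0)) := by
  simp [Mw, Matrix.mulVec, dotProduct, Fintype.sum_sum_type, Fintype.sum_prod_type,
    Fin.sum_univ_four, bathA, Matrix.one_apply, Matrix.smul_apply, Matrix.sub_apply,
    Finset.sum_sub_distrib, Finset.sum_mul, Finset.mul_sum]
  push_cast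
  ring

lemma row3 : (Mw α B m ω w).mulVec v (Sum.inl 3) =
    Complex.I * w * v (Sum.inl 3) + (α + ∑ k, (m k : ℂ) * (ω k)^2) * v (Sum.inl 1)
      + B * v (Sum.inl 2) - ∑ k, (m k : ℂ) * (ω k)^2 * v (Sum.inr (k, 1)) := by
  simp [Mw, Matrix.mulVec, dotProduct, Fintype.sum_sum_type, Fintype.sum_prod_type,
    Fin.sum_univ_four, bathA, Matrix.one_apply, Matrix.smul_apply, Matrix.sub_apply,
    Finset.sum_sub_distrib, Finset.sum_mul, Finset.mul_sum]
  push_cast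
  ring

lemma rowk0 (k : Fin N) : (Mw α B m ω w).mulVec v (Sum.inr (k, 0)) =
    Complex.I * w * v (Sum.inr (k, 0)) - v (Sum.inr (k, 2)) := by
  simp [Mw, Matrix.mulVec, dotProduct, Fintype.sum_sum_type, Fintype.sum_prod_type,
    Fin.sum_univ_four, bathA, Matrix.one_apply, Matrix.smul_apply, Matrix.sub_apply,
    ofReal_ite, neg_ite', Finset.sum_add_distrib, Finset.sum_ite_eq, Finset.sum_sub_distrib]
  ring

lemma rowk1 (k : Fin N) : (Mw α B m ω w).mulVec v (Sum.inr (k, 1)) =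
    Complex.I * w * v (Sum.inr (k, 1)) - v (Sum.inr (k, 3)) := by
  simp [Mw, Matrix.mulVec, dotProduct, Fintype.sum_sum_type, Fintype.sum_prod_type,
    Fin.sum_univ_four, bathA, Matrix.one_apply, Matrix.smul_apply, Matrix.sub_apply,
    ofReal_ite, neg_ite', Finset.sum_add_distrib, Finset.sum_ite_eq, Finset.sum_sub_distrib]
  ring

lemma rowk2 (k : Fin N) : (Mw α B m ω w).mulVec v (Sum.inr (k, 2)) =
    Complex.I * w * v (Sum.inr (k, 2)) - (ω k)^2 * v (Sum.inl 0)
      + (ω k)^2 * v (Sum.inr (k, 0)) := by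
  simp [Mw, Matrix.mulVec, dotProduct, Fintype.sum_sum_type, Fintype.sum_prod_type,
    Fin.sum_univ_four, bathA, Matrix.one_apply, Matrix.smul_apply, Matrix.sub_apply,
    ofReal_ite, neg_ite', Finset.sum_add_distrib, Finset.sum_ite_eq, Finset.sum_sub_distrib]
  ring

lemma rowk3 (k : Fin N) : (Mw α B m ω w).mulVec v (Sum.inr (k, 3)) =
    Complex.I * w * v (Sum.inr (k, 3)) - (ω k)^2 * v (Sum.inl 1)
      + (ω k)^2 * v (Sum.inr (k, 1)) := by
  simp [Mw, Matrix.mulVec, dotProduct, Fintype.sum_sum_type, Fintype.sum_prod_type,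
    Fin.sum_univ_four, bathA, Matrix.one_apply, Matrix.smul_apply, Matrix.sub_apply,
    ofReal_ite, neg_ite', Finset.sum_add_distrib, Finset.sum_ite_eq, Finset.sum_sub_distrib]
  ring
end rows

section main
variable {N : ℕ} {α B : ℝ} {m ω : Fin N → ℝ} {w : ℝ}

lemma sum_bath (m ω : Fin N → ℝ) (w : ℝ) (hd : ∀ k, ((w:ℂ)^2 - (ω k:ℂ)^2) ≠ 0) (X : ℂ) (u : Fin N → ℂ)
    (hu : ∀ k, ((ω k:ℂ)^2 - (w:ℂ)^2) * u k = (ω k:ℂ)^2 * X) :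
    ∑ k, (m k:ℂ) * (ω k)^2 * u k
      = (∑ k, (m k:ℂ) * (ω k)^2) * X - ((∑ j, m j * ω j ^2 * w^2/(w^2 - ω j^2) : ℝ):ℂ) * X := by
  push_cast
  rw [Finset.sum_mul, Finset.sum_mul, ← Finset.sum_sub_distrib]
  refine Finset.sum_congr rfl fun k _ => ?_
  have hdk := hd k
  have huk := hu k
  field_simp
  linear_combination (-(m k:ℂ) * (ω k)^2) * huk
end main


/-- Reduction to the characteristic equation: for real ω with ω² ≠ ωⱼ² for all j,
iω is an eigenvalue of the oscillator–bath matrix A iff for some sign s = ±1,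
(ω + sB/2)² − (α + B²/4) = Σⱼ mⱼωⱼ²ω²/(ω² − ωⱼ²). -/
theorem stmt7 (N : ℕ) (α B : ℝ) (m ω : Fin N → ℝ)
    (hm : ∀ j, 0 < m j) (hω : ∀ j, 0 < ω j) (hmono : StrictMono ω) :
    ∀ w : ℝ, (∀ j, w ^ 2 ≠ ω j ^ 2) →
      (((Complex.I * w) • (1 : Matrix (BathIdx N) (BathIdx N) ℂ) -
          (bathA N α B m ω).map Complex.ofReal).det = 0 ↔
        ∃ s : ℝ, (s = 1 ∨ s = -1) ∧
          (w + s * B / 2) ^ 2 - (α + B ^ 2 / 4) =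
            ∑ j, m j * ω j ^ 2 * w ^ 2 / (w ^ 2 - ω j ^ 2)) := by
  intro w hw
  have hdR : ∀ k, (w^2 - ω k ^2) ≠ 0 := fun k => sub_ne_zero.mpr (hw k)
  have hd : ∀ k, ((w:ℂ)^2 - (ω k:ℂ)^2) ≠ 0 := by
    intro k
    have : ((w^2 - ω k ^2 : ℝ) : ℂ) ≠ 0 := Complex.ofReal_ne_zero.mpr (hdR k)
    push_cast at this
    exact this
  have hd' : ∀ k, ((ω k:ℂ)^2 - (w:ℂ)^2) ≠ 0 := by
    intro k
    have := hd k
    intro h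
    exact this (by linear_combination -h)
  set S : ℝ := ∑ j, m j * ω j ^ 2 * w ^ 2 / (w ^ 2 - ω j ^ 2) with hS
  show (Mw α B m ω w).det = 0 ↔ _
  rw [← Matrix.exists_mulVec_eq_zero_iff]
  constructor
  · rintro ⟨v, hv0, hv⟩
    set X := v (Sum.inl 0) with hX
    set Y := v (Sum.inl 1) with hY
    have hveq : ∀ i, (Mw α B m ω w).mulVec v i = 0 := fun i => by
      have := congrFun hv i; simpa using this
    have e0 := (row0 α B m ω w v).symm.trans (hveq (Sum.inl 0))
    have e1 := (row1 α B m ω w v).symm.trans (hveq (Sum.inl 1))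
    have e2 := (row2 α B m ω w v).symm.trans (hveq (Sum.inl 2))
    have e3 := (row3 α B m ω w v).symm.trans (hveq (Sum.inl 3))
    have ek0 := fun k => (rowk0 α B m ω w v k).symm.trans (hveq (Sum.inr (k,0)))
    have ek1 := fun k => (rowk1 α B m ω w v k).symm.trans (hveq (Sum.inr (k,1)))
    have ek2 := fun k => (rowk2 α B m ω w v k).symm.trans (hveq (Sum.inr (k,2)))
    have ek3 := fun k => (rowk3 α B m ω w v k).symm.trans (hveq (Sum.inr (k,3)))
    have hXk : ∀ k, ((ω k:ℂ)^2 - (w:ℂ)^2) * v (Sum.inr (k,0)) = (ω k:ℂ)^2 * X := by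
      intro k
      linear_combination (Complex.I * w) * (ek0 k) + ek2 k -
        w^2 * v (Sum.inr (k,0)) * Complex.I_sq
    have hYk : ∀ k, ((ω k:ℂ)^2 - (w:ℂ)^2) * v (Sum.inr (k,1)) = (ω k:ℂ)^2 * Y := by
      intro k
      linear_combination (Complex.I * w) * (ek1 k) + ek3 k -
        w^2 * v (Sum.inr (k,1)) * Complex.I_sq
    have hsX := sum_bath m ω w hd X (fun k => v (Sum.inr (k,0))) hXk
    have hsY := sum_bath m ω w hd Y (fun k => v (Sum.inr (k,1))) hYk
    rw [← hS] at hsX hsY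
    have EX : ((α:ℂ) - w^2 + (S:ℂ)) * X - Complex.I * w * B * Y = 0 := by
      linear_combination e2 + (Complex.I * w) * e0 - (B:ℂ) * e1 + hsX -
        w^2 * X * Complex.I_sq
    have EY : ((α:ℂ) - w^2 + (S:ℂ)) * Y + Complex.I * w * B * X = 0 := by
      linear_combination e3 + (Complex.I * w) * e1 + (B:ℂ) * e0 + hsY -
        w^2 * Y * Complex.I_sq
    set aC : ℂ := (α:ℂ) - w^2 + (S:ℂ) with haC
    have hX2 : (aC^2 - ((w:ℂ)*B)^2) * X = 0 := by
      linear_combination aC * EX + Complex.I * w * B * EY - ((w:ℂ)*B)^2 * X * Complex.I_sq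
    have hY2 : (aC^2 - ((w:ℂ)*B)^2) * Y = 0 := by
      linear_combination aC * EY - Complex.I * w * B * EX - ((w:ℂ)*B)^2 * Y * Complex.I_sq
    have hXY : ¬ (X = 0 ∧ Y = 0) := by
      rintro ⟨hX0, hY0⟩
      apply hv0
      have hk0 : ∀ k, v (Sum.inr (k,0)) = 0 := fun k => by
        have := hXk k; rw [hX0, mul_zero] at this
        exact (mul_eq_zero.mp this).resolve_left (hd' k)
      have hk1 : ∀ k, v (Sum.inr (k,1)) = 0 := fun k => by
        have := hYk k; rw [hY0, mul_zero] at this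
        exact (mul_eq_zero.mp this).resolve_left (hd' k)
      funext i
      rcases i with i | ⟨k, i⟩
      · fin_cases i
        · exact hX0
        · exact hY0
        · have h2 := e0; rw [← hX, hX0] at h2; simpa using h2.symm
        · have h2 := e1; rw [← hY, hY0] at h2; simpa using h2.symm
      · fin_cases i
        · exact hk0 k
        · exact hk1 k
        · have := ek0 k; rw [hk0 k] at this; simpa using this.symm
        · have := ek1 k; rw [hk1 k] at this; simpa using this.symm
    have hab : aC^2 = ((w:ℂ)*B)^2 := by
      rcases not_and_or.mp hXY with h | h
      · rcases mul_eq_zero.mp hX2 with h' | h'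
        · linear_combination h'
        · exact absurd h' h
      · rcases mul_eq_zero.mp hY2 with h' | h'
        · linear_combination h'
        · exact absurd h' h
    have habR : (α - w^2 + S)^2 = (w*B)^2 := by
      have h2 : (((α - w^2 + S : ℝ)):ℂ)^2 = (((w*B : ℝ)):ℂ)^2 := by
        push_cast
        convert hab using 2
      exact_mod_cast h2
    have hfac : (α - w^2 + S - w*B) * (α - w^2 + S + w*B) = 0 := by linear_combination habR
    rcases mul_eq_zero.mp hfac with h | h
    · exact ⟨1, Or.inl rfl, by linear_combination -h⟩
    · exact ⟨-1, Or.inr rfl, by linear_combination -h⟩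
  · rintro ⟨s, hs, heq⟩
    have hs2 : s^2 = 1 := by rcases hs with h | h <;> rw [h] <;> norm_num
    have heq' : S = w^2 + s*w*B - α := by linear_combination -heq + (B^2/4) * hs2
    have heqC : (S:ℂ) = (w:ℂ)^2 + (s:ℂ)*w*B - α := by exact_mod_cast heq'
    have hsC : (s:ℂ)^2 = 1 := by exact_mod_cast hs2
    set f : Fin N → ℂ := fun k => (ω k:ℂ)^2 / ((ω k:ℂ)^2 - (w:ℂ)^2) with hf
    have hfk : ∀ k, ((ω k:ℂ)^2 - (w:ℂ)^2) * f k = (ω k:ℂ)^2 * 1 := by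
      intro k
      rw [hf]
      field_simp
      exact mul_div_cancel_right₀ _ (hd' k)
    set v : BathIdx N → ℂ := fun i =>
      match i with
      | .inl 0 => 1
      | .inl 1 => -Complex.I * s
      | .inl 2 => Complex.I * w
      | .inl 3 => Complex.I * w * (-Complex.I * s)
      | .inr (k, 0) => f k
      | .inr (k, 1) => -Complex.I * s * f k
      | .inr (k, 2) => Complex.I * w * f k
      | .inr (k, 3) => Complex.I * w * (-Complex.I * s) * f k
      with hvdef
    have hv0 : v (Sum.inl 0) = 1 := rfl
    have hv1 : v (Sum.inl 1) = -Complex.I * s := rfl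
    have hv2 : v (Sum.inl 2) = Complex.I * w := rfl
    have hv3 : v (Sum.inl 3) = Complex.I * w * (-Complex.I * s) := rfl
    have hvk0 : ∀ k, v (Sum.inr (k, 0)) = f k := fun k => rfl
    have hvk1 : ∀ k, v (Sum.inr (k, 1)) = -Complex.I * s * f k := fun k => rfl
    have hvk2 : ∀ k, v (Sum.inr (k, 2)) = Complex.I * w * f k := fun k => rfl
    have hvk3 : ∀ k, v (Sum.inr (k, 3)) = Complex.I * w * (-Complex.I * s) * f k := fun k => rfl
    have hsum0 : ∑ k, (m k:ℂ) * (ω k)^2 * f k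
        = (∑ k, (m k:ℂ) * (ω k)^2) * 1 - ((S:ℝ):ℂ) * 1 := by
      rw [hS]; exact sum_bath m ω w hd 1 f hfk
    have H0 : (Mw α B m ω w).mulVec v (Sum.inl 0) = 0 := by
      rw [row0, hv0, hv2]; ring
    have H1 : (Mw α B m ω w).mulVec v (Sum.inl 1) = 0 := by
      rw [row1, hv1, hv3]; ring
    have H2 : (Mw α B m ω w).mulVec v (Sum.inl 2) = 0 := by
      rw [row2, hv2, hv0, hv3]
      simp only [hvk0]
      rw [hsum0]
      linear_combination heqC + ((w:ℂ)^2 + (s:ℂ)*w*B) * Complex.I_sq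
    have H3 : (Mw α B m ω w).mulVec v (Sum.inl 3) = 0 := by
      rw [row3, hv3, hv1, hv2]
      simp only [hvk1]
      have hpull : ∑ k, (m k:ℂ) * (ω k)^2 * (-Complex.I * s * f k)
          = (-Complex.I * (s:ℂ)) * ∑ k, (m k:ℂ) * (ω k)^2 * f k := by
        rw [Finset.mul_sum]
        exact Finset.sum_congr rfl fun k _ => by ring
      rw [hpull, hsum0]
      linear_combination (-Complex.I * (s:ℂ)) * heqC +
        (-Complex.I * s * (w:ℂ)^2) * Complex.I_sq + (-Complex.I * w * B) * hsC
    have Hk0 : ∀ k, (Mw α B m ω w).mulVec v (Sum.inr (k, 0)) = 0 := fun k => by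
      rw [rowk0, hvk0 k, hvk2 k]; ring
    have Hk1 : ∀ k, (Mw α B m ω w).mulVec v (Sum.inr (k, 1)) = 0 := fun k => by
      rw [rowk1, hvk1 k, hvk3 k]; ring
    have Hk2 : ∀ k, (Mw α B m ω w).mulVec v (Sum.inr (k, 2)) = 0 := fun k => by
      rw [rowk2, hvk2 k, hvk0 k, hv0]
      linear_combination hfk k + (w:ℂ)^2 * f k * Complex.I_sq
    have Hk3 : ∀ k, (Mw α B m ω w).mulVec v (Sum.inr (k, 3)) = 0 := fun k => by
      rw [rowk3, hvk3 k, hvk1 k, hv1]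
      linear_combination (-Complex.I * (s:ℂ)) * hfk k +
        (-Complex.I * s * (w:ℂ)^2) * f k * Complex.I_sq
    refine ⟨v, ?_, ?_⟩
    · intro h
      have h1 : v (Sum.inl 0) = 0 := by rw [h]; rfl
      rw [hv0] at h1
      exact one_ne_zero h1
    · funext i
      rcases i with i | ⟨k, i⟩
      · fin_cases i
        · exact H0
        · exact H1
        · exact H2
        · exact H3
      · fin_cases i
        · exact Hk0 k
        · exact Hk1 k
        · exact Hk2 k
        · exact Hk3 k
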